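/- For any σ ∈ S_{n+1} and any i ∈ {1,…,n+1}, inv_i(σ) − inv_{σ(i)}(σ^{-1}) = σ(i) − i, where inv_i(σ) = #{j : i < j and σ(i) > σ(j)}. -/
import Mathlib


/-- `inv_i(σ) = #{j : i < j and σ(i) > σ(j)}`. -/
def invAt {n : ℕ} (σ : Equiv.Perm (Fin n)) (i : Fin n) : ℕ :=
  (Finset.univ.filter fun j : Fin n => i < j ∧ σ j < σ i).card

/-- For any `σ ∈ S_{n+1}` and any `i`, `inv_i(σ) - inv_{σ(i)}(σ⁻¹) = σ(i) - i`. -/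
theorem invAt_sub_invAt_inv (n : ℕ) (σ : Equiv.Perm (Fin (n + 1))) (i : Fin (n + 1)) :
    (invAt σ i : ℤ) - (invAt σ⁻¹ (σ i) : ℤ) = (σ i : ℤ) - (i : ℕ) := by
  classical
  set A := Finset.univ.filter fun j : Fin (n+1) => j < i ∧ σ j < σ i with hA
  set B := Finset.univ.filter fun j : Fin (n+1) => i < j ∧ σ j < σ i with hB
  set C := Finset.univ.filter fun j : Fin (n+1) => j < i ∧ σ i < σ j with hC
  have hinv : invAt σ⁻¹ (σ i) = C.card := by
    unfold invAt
    apply Finset.card_bij' (fun k _ => σ⁻¹ k) (fun j _ => σ j)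
    · intro k hk
      simp only [hC, Finset.mem_filter, Finset.mem_univ, true_and] at hk ⊢
      simpa using hk.symm
    · intro j hj
      simp only [hC, Finset.mem_filter, Finset.mem_univ, true_and] at hj ⊢
      simpa using hj.symm
    · intro k _; simp
    · intro j _; simp
  have hIio : ∀ a : Fin (n+1),
      (Finset.univ.filter fun j : Fin (n+1) => j < a).card = (a : ℕ) := by
    intro a
    rw [show (Finset.univ.filter fun j : Fin (n+1) => j < a) = Finset.Iio a by
      ext j; simp]
    exact Fin.card_Iio a
  -- i = A.card + C.card
  have h1 : (i : ℕ) = A.card + C.card := by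
    rw [← hIio i]
    rw [show (Finset.univ.filter fun j : Fin (n+1) => j < i) = A ∪ C by
      ext j
      simp only [hA, hC, Finset.mem_union, Finset.mem_filter, Finset.mem_univ, true_and]
      constructor
      · intro hj
        rcases lt_or_gt_of_ne (fun h : σ j = σ i => absurd (σ.injective h) hj.ne) with h | h
        · exact Or.inl ⟨hj, h⟩
        · exact Or.inr ⟨hj, h⟩
      · rintro (⟨hj, _⟩ | ⟨hj, _⟩) <;> exact hj]
    apply Finset.card_union_of_disjoint
    rw [Finset.disjoint_filter]
    rintro j _ ⟨_, h1⟩ ⟨_, h2⟩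
    exact absurd h2 (not_lt.mpr h1.le)
  -- σ i = A.card + B.card
  have h2 : ((σ i : ℕ)) = A.card + B.card := by
    have : (Finset.univ.filter fun j : Fin (n+1) => σ j < σ i).card = (σ i : ℕ) := by
      rw [← hIio (σ i)]
      apply Finset.card_bij' (fun j _ => σ j) (fun k _ => σ⁻¹ k)
      · intro j hj
        simp only [Finset.mem_filter, Finset.mem_univ, true_and] at hj ⊢
        exact hj
      · intro k hk
        simp only [Finset.mem_filter, Finset.mem_univ, true_and] at hk ⊢
        simpa using hk
      · intro j _; simp
      · intro k _; simp
    rw [← this]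
    rw [show (Finset.univ.filter fun j : Fin (n+1) => σ j < σ i) = A ∪ B by
      ext j
      simp only [hA, hB, Finset.mem_union, Finset.mem_filter, Finset.mem_univ, true_and]
      constructor
      · intro hj
        rcases lt_or_gt_of_ne (fun h : j = i => absurd (h ▸ hj) (lt_irrefl _)) with h | h
        · exact Or.inl ⟨h, hj⟩
        · exact Or.inr ⟨h, hj⟩
      · rintro (⟨_, hj⟩ | ⟨_, hj⟩) <;> exact hj]
    apply Finset.card_union_of_disjoint
    rw [Finset.disjoint_filter]
    rintro j _ ⟨h1, _⟩ ⟨h2, _⟩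
    exact absurd h2 (not_lt.mpr h1.le)
  have hB' : invAt σ i = B.card := rfl
  rw [hB', hinv]
  have := congrArg (Nat.cast : ℕ → ℤ) h1
  have := congrArg (Nat.cast : ℕ → ℤ) h2
  push_cast at *
  omega
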